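/- For any lattice coset Gaussian sum, shifting the center cannot increase the mass over the integers: for all s > 0 and μ ∈ ℝ, ∑_{k∈ℤ} exp(-π(k-μ)²/s²) ≤ ∑_{k∈ℤ} exp(-πk²/s²). -/

import Mathlib

open Real

section Aux
open Complex

lemma summable_gauss_int (b : ℝ) (hb : 0 < b) :
    Summable (fun n : ℤ ↦ Real.exp (-π * b * (n : ℝ) ^ 2)) := by
  have h := (summable_jacobiTheta₂_term_iff 0 (b * Complex.I)).mpr (by simp [hb])
  rw [← summable_norm_iff] at h
  refine h.congr fun n ↦ ?_
  rw [norm_jacobiTheta₂_term]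
  norm_num
  ring_nf

lemma gauss_shift (a μ : ℝ) (ha : 0 < a) :
    (∑' k : ℤ, Real.exp (-π * a * ((k : ℝ) - μ) ^ 2)) =
      (1 / a ^ (1 / 2 : ℝ)) *
        ∑' n : ℤ, Real.exp (-π / a * (n : ℝ) ^ 2) * Real.cos (2 * π * μ * n) := by
  have ha' : (0:ℝ) < (a : ℂ).re := by simpa using ha
  have key := Complex.tsum_exp_neg_quadratic ha' ((a : ℂ) * (μ : ℂ))
  have h1 : ∀ n : ℤ, cexp (-π * a * (n:ℂ) ^ 2 + 2 * π * ((a:ℂ) * μ) * n) =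
      cexp (-π * a * ((n:ℂ) - μ) ^ 2) * cexp ((π * a * μ ^ 2 : ℝ) : ℂ) := by
    intro n
    rw [← Complex.exp_add]
    congr 1
    push_cast
    ring
  have h2 : ∀ n : ℤ, cexp (-π / a * ((n:ℂ) + I * ((a:ℂ) * μ)) ^ 2) =
      (Real.exp (-π / a * (n : ℝ) ^ 2) : ℂ) * cexp (-2 * π * I * μ * n)
        * cexp ((π * a * μ ^ 2 : ℝ) : ℂ) := by
    intro n
    rw [Complex.ofReal_exp, ← Complex.exp_add, ← Complex.exp_add]
    congr 1
    push_cast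
    have ha0 : (a:ℂ) ≠ 0 := by exact_mod_cast ha.ne'
    field_simp
    linear_combination (-((a:ℂ)^2 * (μ:ℂ)^2)) * Complex.I_sq
  simp_rw [h1, h2] at key
  rw [tsum_mul_right, tsum_mul_right, ← mul_assoc] at key
  have hexp : cexp ((π * a * μ ^ 2 : ℝ) : ℂ) ≠ 0 := Complex.exp_ne_zero _
  have key2 : (∑' n : ℤ, cexp (-π * a * ((n:ℂ) - μ) ^ 2)) =
      1 / (a:ℂ) ^ (1/2 : ℂ) *
        ∑' n : ℤ, (Real.exp (-π / a * (n : ℝ) ^ 2) : ℂ) * cexp (-2 * π * I * μ * n) :=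
    mul_right_cancel₀ hexp key
  -- LHS is real
  have hL : (∑' n : ℤ, cexp (-π * a * ((n:ℂ) - μ) ^ 2)) =
      ((∑' k : ℤ, Real.exp (-π * a * ((k : ℝ) - μ) ^ 2) : ℝ) : ℂ) := by
    rw [Complex.ofReal_tsum]
    congr 1
    ext n
    rw [Complex.ofReal_exp]
    congr 1
    push_cast
    ring
  rw [hL] at key2
  -- take real parts
  have hsum : Summable (fun n : ℤ ↦ (Real.exp (-π / a * (n : ℝ) ^ 2) : ℂ)
      * cexp (-2 * π * I * μ * n)) := by
    apply Summable.of_norm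
    have := summable_gauss_int a⁻¹ (by positivity)
    refine this.congr fun n ↦ ?_
    have hn : ‖cexp (-2 * (π:ℂ) * I * μ * n)‖ = 1 := by
      rw [Complex.norm_exp]
      norm_num
    rw [norm_mul, hn, mul_one, Complex.norm_real, Real.norm_eq_abs,
      abs_of_pos (Real.exp_pos _)]
    simp [div_eq_mul_inv]
  have hre := congrArg Complex.re key2
  rw [Complex.ofReal_re] at hre
  rw [hre]
  have hcpow : (1 / (a:ℂ) ^ (1/2 : ℂ)) = ((1 / a ^ (1/2 : ℝ) : ℝ) : ℂ) := by
    rw [Complex.ofReal_div, Complex.ofReal_cpow ha.le]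
    norm_num
  rw [hcpow, Complex.re_ofReal_mul, Complex.re_tsum hsum]
  congr 1
  refine tsum_congr fun n ↦ ?_
  rw [Complex.re_ofReal_mul, Complex.exp_re]
  have h3 : (-2 * (π:ℂ) * I * μ * n).re = 0 := by simp
  have h4 : (-2 * (π:ℂ) * I * μ * n).im = -(2 * π * μ * n) := by
    simp
  rw [h3, h4, Real.exp_zero, one_mul, Real.cos_neg]

end Aux

theorem center_shift_gaussian_mass (s μ : ℝ) (hs : 0 < s) :
    (∑' k : ℤ, Real.exp (-π * ((k : ℝ) - μ) ^ 2 / s ^ 2)) ≤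
      ∑' k : ℤ, Real.exp (-π * (k : ℝ) ^ 2 / s ^ 2) := by
  set a : ℝ := (s ^ 2)⁻¹ with ha_def
  have ha : 0 < a := by positivity
  have e1 : ∀ x : ℝ, -π * x ^ 2 / s ^ 2 = -π * a * x ^ 2 := by
    intro x; rw [ha_def]; field_simp
  have lhs_eq : (∑' k : ℤ, Real.exp (-π * ((k : ℝ) - μ) ^ 2 / s ^ 2)) =
      (1 / a ^ (1 / 2 : ℝ)) *
        ∑' n : ℤ, Real.exp (-π / a * (n : ℝ) ^ 2) * Real.cos (2 * π * μ * n) := by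
    rw [← gauss_shift a μ ha]
    exact tsum_congr fun k ↦ by rw [e1]
  have rhs_eq : (∑' k : ℤ, Real.exp (-π * (k : ℝ) ^ 2 / s ^ 2)) =
      (1 / a ^ (1 / 2 : ℝ)) * ∑' n : ℤ, Real.exp (-π / a * (n : ℝ) ^ 2) := by
    rw [← Real.tsum_exp_neg_mul_int_sq ha]
    exact tsum_congr fun k ↦ by rw [e1]
  rw [lhs_eq, rhs_eq]
  apply mul_le_mul_of_nonneg_left _ (by positivity)
  have hg : Summable (fun n : ℤ ↦ Real.exp (-π / a * (n : ℝ) ^ 2)) := by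
    have := summable_gauss_int a⁻¹ (by positivity)
    refine this.congr fun n ↦ ?_
    simp [div_eq_mul_inv]
  refine Summable.tsum_le_tsum (fun n ↦ ?_) ?_ hg
  · nlinarith [Real.cos_le_one (2 * π * μ * n), Real.exp_pos (-π / a * (n:ℝ)^2)]
  · apply Summable.of_norm_bounded hg
    intro n
    rw [Real.norm_eq_abs, abs_mul, abs_of_pos (Real.exp_pos _)]
    nlinarith [abs_cos_le_one (2 * π * μ * (n:ℝ)), Real.exp_pos (-π / a * (n:ℝ)^2), abs_nonneg (Real.cos (2*π*μ*n))]
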